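/- Let G be a graph on n vertices with adjacency matrix A and walk matrix W, let p be a prime and λ₀ an integer. Suppose the rank of W over the field with p elements is n−1, the rank of A − λ₀I over the field with p elements is n−2, and z is an integer vector with Az ≡ λ₀z (mod p), eᵀz ≡ 0 (mod p), and z ≢ 0 (mod p). Then the rank over the field with p elements of the n×(n+1) matrix [A − λ₀I, z] obtained by appending z as an extra column to A − λ₀I equals n−1; in particular, z mod p does not lie in the column space of A − λ₀I over F_p. -/

import Mathlib

open Matrix

open scoped Classical in
/-- The (0,1)-adjacency matrix of a simple graph on `Fin n`, with entries in `R`. -/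
noncomputable def adjMat {n : ℕ} (R : Type*) [Zero R] [One R] (G : SimpleGraph (Fin n)) :
    Matrix (Fin n) (Fin n) R :=
  Matrix.of fun i j => if G.Adj i j then 1 else 0

/-- The walk matrix `W = [e, Ae, A²e, …, A^{n−1}e]` of a square matrix `A`,
where `e` is the all-ones vector: the `j`-th column is `A^j e`. -/
noncomputable def walkMatrix {R : Type*} [CommRing R] {n : ℕ} (A : Matrix (Fin n) (Fin n) R) :
    Matrix (Fin n) (Fin n) R :=
  Matrix.of fun i j => (A ^ (j : ℕ) *ᵥ fun _ => 1) i

section aux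

variable {n : ℕ} {k : Type*} [Field k]

lemma pow_mulVec_eigen (M : Matrix (Fin n) (Fin n) k) {lam : k} {u : Fin n → k}
    (hu : M *ᵥ u = lam • u) (j : ℕ) : M ^ j *ᵥ u = lam ^ j • u := by
  induction j with
  | zero => simp
  | succ j ih =>
      rw [pow_succ, ← Matrix.mulVec_mulVec, hu, Matrix.mulVec_smul, ih, smul_smul, ← pow_succ']

lemma eigen_dot (M : Matrix (Fin n) (Fin n) k) (hM : Mᵀ = M) {lam : k} {u : Fin n → k}
    (hu : M *ᵥ u = lam • u) (w : Fin n → k) (j : ℕ) :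
    u ⬝ᵥ (M ^ j *ᵥ w) = lam ^ j * (u ⬝ᵥ w) := by
  have h1 : u ᵥ* M ^ j = lam ^ j • u := by
    rw [← Matrix.mulVec_transpose, Matrix.transpose_pow, hM, pow_mulVec_eigen M hu]
  rw [Matrix.dotProduct_mulVec, h1, smul_dotProduct, smul_eq_mul]

end aux

theorem stmt_11 {n : ℕ} (G : SimpleGraph (Fin n))
    (A : Matrix (Fin n) (Fin n) ℤ) (hA : A = adjMat ℤ G)
    (W : Matrix (Fin n) (Fin n) ℤ) (hW : W = walkMatrix A)
    (p : ℕ) (hp : p.Prime) (lam : ℤ)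
    (hrankW : (W.map (Int.cast : ℤ → ZMod p)).rank = n - 1)
    (hrankA : ((A - lam • (1 : Matrix (Fin n) (Fin n) ℤ)).map (Int.cast : ℤ → ZMod p)).rank
      = n - 2)
    (z : Fin n → ℤ)
    (hz0 : ∀ i, (p : ℤ) ∣ ((A *ᵥ z) i - lam * z i))
    (hz1 : (p : ℤ) ∣ (fun _ => (1 : ℤ)) ⬝ᵥ z)
    (hz2 : ¬(∀ i, (p : ℤ) ∣ z i)) :
    ((Matrix.fromCols (A - lam • (1 : Matrix (Fin n) (Fin n) ℤ))
        (Matrix.of fun i (_ : Unit) => z i)).map (Int.cast : ℤ → ZMod p)).rank = n - 1 ∧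
      ¬ ∃ y : Fin n → ZMod p,
        ((A - lam • (1 : Matrix (Fin n) (Fin n) ℤ)).map (Int.cast : ℤ → ZMod p)) *ᵥ y
          = fun i => ((z i : ZMod p)) := by
  haveI : Fact p.Prime := ⟨hp⟩
  set k := ZMod p with hk
  set Ab : Matrix (Fin n) (Fin n) k := A.map (Int.cast : ℤ → k) with hAb
  set B : Matrix (Fin n) (Fin n) k :=
    (A - lam • (1 : Matrix (Fin n) (Fin n) ℤ)).map (Int.cast : ℤ → k) with hB
  set zb : Fin n → k := fun i => ((z i : k)) with hzb
  set lb : k := (lam : k) with hlb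
  set e : Fin n → k := fun _ => 1 with he
  have cast_mulVec : ∀ (M : Matrix (Fin n) (Fin n) ℤ) (v : Fin n → ℤ) (i : Fin n),
      (((M *ᵥ v) i : ℤ) : k) = ((M.map (Int.cast : ℤ → k)) *ᵥ fun j => ((v j : k))) i := by
    intro M v i
    simp [Matrix.mulVec, dotProduct]
    exact (Int.cast_sum _ _).trans (Finset.sum_congr rfl fun _ _ => Int.cast_mul _ _)
  have hn : 2 ≤ n := by
    by_contra hlt
    push_neg at hlt
    interval_cases n
    · exact hz2 (fun i => i.elim0)
    · apply hz2
      intro i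
      have hi : i = 0 := Subsingleton.elim _ _
      subst hi
      simpa [dotProduct] using hz1
  have hBeq : B = Ab - lb • 1 := by
    ext i j
    simp only [hB, hAb, hlb, Matrix.map_apply, Matrix.sub_apply, Matrix.smul_apply, smul_eq_mul,
      Int.cast_sub, Int.cast_mul]
    by_cases hij : i = j <;> simp [Matrix.one_apply, hij]
  have hAsymm : Abᵀ = Ab := by
    ext i j
    simp only [hAb, Matrix.transpose_apply, Matrix.map_apply, hA, adjMat, Matrix.of_apply]
    by_cases h : G.Adj j i
    · simp [h, h.symm]
    · have h' : ¬ G.Adj i j := fun hh => h hh.symm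
      simp [h, h']
  have hBsymm : Bᵀ = B := by
    rw [hBeq, Matrix.transpose_sub, hAsymm, Matrix.transpose_smul, Matrix.transpose_one]
  have hzeig : Ab *ᵥ zb = lb • zb := by
    funext i
    have h := (ZMod.intCast_zmod_eq_zero_iff_dvd _ p).2 (hz0 i)
    push_cast at h
    rw [cast_mulVec A z i] at h
    have h2 : (Ab *ᵥ zb) i - lb * zb i = 0 := by
      simpa [hAb, hzb, hlb] using h
    have h3 := sub_eq_zero.mp h2
    simpa [Pi.smul_apply, smul_eq_mul] using h3
  have hBz : B *ᵥ zb = 0 := by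
    rw [hBeq, Matrix.sub_mulVec, hzeig, Matrix.smul_mulVec, Matrix.one_mulVec, sub_self]
  have hzb0 : zb ≠ 0 := by
    intro h
    apply hz2
    intro i
    have : zb i = 0 := by rw [h]; rfl
    exact (ZMod.intCast_zmod_eq_zero_iff_dvd _ p).1 this
  have hze : zb ⬝ᵥ e = 0 := by
    have h := (ZMod.intCast_zmod_eq_zero_iff_dvd _ p).2 hz1
    push_cast at h
    rw [dotProduct_comm]
    simpa [dotProduct, hzb, he] using h
  set Wb : Matrix (Fin n) (Fin n) k := W.map (Int.cast : ℤ → k) with hWb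
  have hone : (fun _ : Fin n => ((1 : ℤ) : k)) = e := by
    funext j'; simp [he]
  have hWbar : ∀ i j : Fin n, Wb i j = (Ab ^ (j : ℕ) *ᵥ e) i := by
    intro i j
    have hpow : (A ^ (j : ℕ)).map (Int.cast : ℤ → k) = Ab ^ (j : ℕ) := by
      have := map_pow ((Int.castRingHom k).mapMatrix) A (j : ℕ)
      simpa [RingHom.mapMatrix_apply] using this
    have h1 := cast_mulVec (A ^ (j : ℕ)) (fun _ => 1) i
    have h2 : Wb i j = (((A ^ (j : ℕ) *ᵥ fun _ => (1:ℤ)) i : ℤ) : k) := by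
      rw [hWb]; simp [Matrix.map_apply, hW, walkMatrix]
    rw [h2, h1, hpow, hone]
  have keyW : ∀ u : Fin n → k, Ab *ᵥ u = lb • u →
      Wbᵀ *ᵥ u = (u ⬝ᵥ e) • (fun j : Fin n => lb ^ (j : ℕ)) := by
    intro u hu
    funext j
    have h0 : (Wbᵀ *ᵥ u) j = (fun i => Wb i j) ⬝ᵥ u := by
      simp [Matrix.mulVec, dotProduct, Matrix.transpose_apply]
    rw [h0]
    have hcol : (fun i => Wb i j) = Ab ^ (j : ℕ) *ᵥ e := by
      funext i; exact hWbar i j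
    rw [hcol, dotProduct_comm, eigen_dot Ab hAsymm hu e (j : ℕ)]
    simp [mul_comm]
  have hrankB' : Module.finrank k ↥(LinearMap.ker B.mulVecLin) = 2 := by
    have h := LinearMap.finrank_range_add_finrank_ker B.mulVecLin
    have hrk : Module.finrank k ↥(LinearMap.range B.mulVecLin) = n - 2 := hrankA
    rw [hrk] at h
    simp only [Module.finrank_fintype_fun_eq_card, Fintype.card_fin] at h
    omega
  have hrankWt : Module.finrank k ↥(LinearMap.ker (Wbᵀ).mulVecLin) = 1 := by
    have h := LinearMap.finrank_range_add_finrank_ker (Wbᵀ).mulVecLin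
    have hrk : Module.finrank k ↥(LinearMap.range (Wbᵀ).mulVecLin) = n - 1 := by
      have h2 := Matrix.rank_transpose Wb
      rw [← h2] at hrankW
      exact hrankW
    rw [hrk] at h
    simp only [Module.finrank_fintype_fun_eq_card, Fintype.card_fin] at h
    omega
  have hzker : zb ∈ LinearMap.ker (Wbᵀ).mulVecLin := by
    rw [LinearMap.mem_ker, Matrix.mulVecLin_apply, keyW zb hzeig, hze, zero_smul]
  have hkerspan : LinearMap.ker (Wbᵀ).mulVecLin = Submodule.span k {zb} := by
    refine (Submodule.eq_of_le_of_finrank_eq ?_ ?_).symm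
    · rw [Submodule.span_le, Set.singleton_subset_iff]; exact hzker
    · rw [finrank_span_singleton hzb0, hrankWt]
  have hnotle : ¬ (LinearMap.ker B.mulVecLin ≤ LinearMap.ker (Wbᵀ).mulVecLin) := by
    intro hle
    have := Submodule.finrank_mono hle
    rw [hrankB', hrankWt] at this
    omega
  obtain ⟨u, huB, huW⟩ := SetLike.not_le_iff_exists.mp hnotle
  have eigen_of_kerB : ∀ v : Fin n → k, B *ᵥ v = 0 → Ab *ᵥ v = lb • v := by
    intro v hv
    rw [hBeq, Matrix.sub_mulVec, Matrix.smul_mulVec, Matrix.one_mulVec] at hv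
    exact sub_eq_zero.mp hv
  have huB' : B *ᵥ u = 0 := huB
  have hueig : Ab *ᵥ u = lb • u := eigen_of_kerB u huB'
  have hue : u ⬝ᵥ e ≠ 0 := by
    intro h
    apply huW
    rw [LinearMap.mem_ker, Matrix.mulVecLin_apply, keyW u hueig, h, zero_smul]
  -- the main claim: zb is not in the column space of B
  have hswap : ∀ v w : Fin n → k, (B *ᵥ v) ⬝ᵥ w = v ⬝ᵥ (B *ᵥ w) := by
    intro v w
    rw [dotProduct_comm (B *ᵥ v) w, Matrix.dotProduct_mulVec,
      ← Matrix.mulVec_transpose, hBsymm, dotProduct_comm]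
  have hnotin : ¬ ∃ y : Fin n → k, B *ᵥ y = zb := by
    rintro ⟨y, hy⟩
    set t : ℕ → k := fun j => y ⬝ᵥ (Ab ^ j *ᵥ e) with ht
    have hrec : ∀ j, t (j + 1) = lb * t j := by
      intro j
      have h0 : zb ⬝ᵥ (Ab ^ j *ᵥ e) = 0 := by
        rw [eigen_dot Ab hAsymm hzeig e j, hze, mul_zero]
      rw [← hy, hswap] at h0
      have hBv : B *ᵥ (Ab ^ j *ᵥ e) = Ab ^ (j + 1) *ᵥ e - lb • (Ab ^ j *ᵥ e) := by
        rw [hBeq, Matrix.sub_mulVec, Matrix.smul_mulVec, Matrix.one_mulVec,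
          Matrix.mulVec_mulVec, ← pow_succ']
      rw [hBv, dotProduct_sub, dotProduct_smul, smul_eq_mul] at h0
      have := sub_eq_zero.mp h0
      rw [ht]
      exact this.symm ▸ rfl
    have hpowt : ∀ j, t j = lb ^ j * t 0 := by
      intro j
      induction j with
      | zero => simp
      | succ j ih => rw [hrec j, ih, ← mul_assoc, ← pow_succ']
    have hWy : Wbᵀ *ᵥ y = (t 0) • (fun j : Fin n => lb ^ (j : ℕ)) := by
      funext j
      have h0 : (Wbᵀ *ᵥ y) j = (fun i => Wb i j) ⬝ᵥ y := by
        simp [Matrix.mulVec, dotProduct, Matrix.transpose_apply]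
      have hcol : (fun i => Wb i j) = Ab ^ (j : ℕ) *ᵥ e := by
        funext i; exact hWbar i j
      rw [h0, hcol, dotProduct_comm]
      rw [show y ⬝ᵥ (Ab ^ (j:ℕ) *ᵥ e) = t (j : ℕ) from rfl, hpowt]
      simp [mul_comm]
    set c : k := t 0 / (u ⬝ᵥ e) with hc
    have hker : Wbᵀ *ᵥ (y - c • u) = 0 := by
      rw [Matrix.mulVec_sub, Matrix.mulVec_smul, hWy, keyW u hueig, smul_smul,
        hc, div_mul_cancel₀ _ hue, sub_self]
    have hmem : y - c • u ∈ LinearMap.ker (Wbᵀ).mulVecLin := by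
      rw [LinearMap.mem_ker, Matrix.mulVecLin_apply]; exact hker
    rw [hkerspan, Submodule.mem_span_singleton] at hmem
    obtain ⟨a, ha⟩ := hmem
    have hy2 : y = a • zb + c • u := by
      rw [ha]; abel
    have : zb = 0 := by
      rw [← hy, hy2, Matrix.mulVec_add, Matrix.mulVec_smul, Matrix.mulVec_smul,
        hBz, huB', smul_zero, smul_zero, add_zero]
    exact hzb0 this
  -- conclude
  set Zc : Matrix (Fin n) Unit k := Matrix.of fun i (_ : Unit) => zb i with hZc
  have hMeq : (Matrix.fromCols (A - lam • (1 : Matrix (Fin n) (Fin n) ℤ))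
      (Matrix.of fun i (_ : Unit) => z i)).map (Int.cast : ℤ → k)
      = Matrix.fromCols B Zc := by
    ext i j
    cases j with
    | inl j => simp [Matrix.map_apply, Matrix.fromCols_apply_inl, hB]
    | inr j => simp [Matrix.map_apply, Matrix.fromCols_apply_inr, hZc, hzb]
  have hZcmul : ∀ v : Unit → k, Zc *ᵥ v = (v ()) • zb := by
    intro v
    funext i
    simp [hZc, Matrix.mulVec, dotProduct, mul_comm]
  have hrange : LinearMap.range (Matrix.fromCols B Zc).mulVecLin
      = LinearMap.range B.mulVecLin ⊔ Submodule.span k {zb} := by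
    apply le_antisymm
    · rintro x ⟨w, rfl⟩
      rw [Matrix.mulVecLin_apply]
      have hw : w = Sum.elim (w ∘ Sum.inl) (w ∘ Sum.inr) := by
        funext s; cases s <;> rfl
      rw [hw, Matrix.fromCols_mulVec_sumElim]
      apply Submodule.add_mem_sup
      · exact ⟨w ∘ Sum.inl, rfl⟩
      · rw [hZcmul]
        exact Submodule.smul_mem _ _ (Submodule.mem_span_singleton_self zb)
    · apply sup_le
      · rintro x ⟨w, rfl⟩
        refine ⟨Sum.elim w 0, ?_⟩
        rw [Matrix.mulVecLin_apply, Matrix.fromCols_mulVec_sumElim, hZcmul]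
        simp
      · rw [Submodule.span_le, Set.singleton_subset_iff]
        refine ⟨Sum.elim 0 (fun _ => 1), ?_⟩
        rw [Matrix.mulVecLin_apply, Matrix.fromCols_mulVec_sumElim, hZcmul]
        simp
  have hinf : LinearMap.range B.mulVecLin ⊓ Submodule.span k {zb} = ⊥ := by
    rw [eq_bot_iff]
    intro x hx
    obtain ⟨hx1, hx2⟩ := Submodule.mem_inf.mp hx
    rw [Submodule.mem_span_singleton] at hx2
    obtain ⟨a, rfl⟩ := hx2
    rcases eq_or_ne a 0 with rfl | ha
    · simp
    · exfalso
      obtain ⟨y, hy⟩ := hx1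
      apply hnotin
      refine ⟨a⁻¹ • y, ?_⟩
      rw [Matrix.mulVec_smul]
      rw [Matrix.mulVecLin_apply] at hy
      rw [hy, smul_smul, inv_mul_cancel₀ ha, one_smul]
  have hfr := Submodule.finrank_sup_add_finrank_inf_eq
    (LinearMap.range B.mulVecLin) (Submodule.span k {zb})
  rw [hinf, finrank_bot, add_zero, finrank_span_singleton hzb0] at hfr
  have hfrB : Module.finrank k ↥(LinearMap.range B.mulVecLin) = n - 2 := hrankA
  rw [hfrB] at hfr
  constructor
  · rw [hMeq]
    show Module.finrank k ↥(LinearMap.range (Matrix.fromCols B Zc).mulVecLin) = n - 1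
    rw [hrange, hfr]
    omega
  · rintro ⟨y, hy⟩
    exact hnotin ⟨y, hy⟩
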